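/- Let n be an even positive integer, let A and B be two disjoint subsets of [n], and let M be a uniformly random perfect matching of the complete graph K_n on vertex set [n]. Then the probability that the number of edges of M with one endpoint in A and the other endpoint in B is at most |A||B|/(8n) is at most exp(−|A||B|/(32n)). -/

import Mathlib

open scoped BigOperators

/-- Perfect matchings of the complete graph on `[n]`, encoded as fixed-point-free involutions:
the edges of the matching are the pairs `{i, f i}`. -/
def perfectMatchings (n : ℕ) : Set (Equiv.Perm (Fin n)) :=
  {f | ∀ i, f (f i) = i ∧ f i ≠ i}

namespace MatchAux

open Finset Equiv

variable {n : ℕ}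

def pm (n : ℕ) (V : Finset (Fin n)) : Finset (Equiv.Perm (Fin n)) :=
  Finset.univ.filter (fun f => ∀ i, f (f i) = i ∧ (f i = i ↔ i ∉ V))

lemma mem_pm {V : Finset (Fin n)} {f : Equiv.Perm (Fin n)} :
    f ∈ pm n V ↔ ∀ i, f (f i) = i ∧ (f i = i ↔ i ∉ V) := by
  simp [pm]

lemma pm_invol {V : Finset (Fin n)} {f} (hf : f ∈ pm n V) (i) : f (f i) = i :=
  (mem_pm.1 hf i).1

lemma pm_fix {V : Finset (Fin n)} {f} (hf : f ∈ pm n V) {i} (hi : i ∉ V) : f i = i :=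
  (mem_pm.1 hf i).2.2 hi

lemma pm_ne {V : Finset (Fin n)} {f} (hf : f ∈ pm n V) {i} (hi : i ∈ V) : f i ≠ i := by
  intro h
  exact ((mem_pm.1 hf i).2.1 h) hi

/-- basic facts about `g ∈ pm n ((V.erase v).erase u)` and `swap v u * g`. -/
lemma aux_apply {V : Finset (Fin n)} {v u : Fin n} (hvu : u ≠ v)
    {g : Equiv.Perm (Fin n)} (hg : g ∈ pm n ((V.erase v).erase u)) :
    g v = v ∧ g u = u ∧
      ∀ i, i ≠ v → i ≠ u → ((Equiv.swap v u * g) i = g i ∧ g i ≠ v ∧ g i ≠ u) := by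
  have hgv : g v = v := pm_fix hg (by simp)
  have hgu : g u = u := pm_fix hg (by simp [hvu])
  refine ⟨hgv, hgu, fun i hiv hiu => ?_⟩
  have h1 : g i ≠ v := by
    intro h
    have := pm_invol hg i
    rw [h, hgv] at this
    exact hiv this.symm
  have h2 : g i ≠ u := by
    intro h
    have := pm_invol hg i
    rw [h, hgu] at this
    exact hiu this.symm
  refine ⟨?_, h1, h2⟩
  simp [Equiv.Perm.mul_apply, Equiv.swap_apply_of_ne_of_ne h1 h2]

lemma pm_extend {V : Finset (Fin n)} {v u : Fin n} (hv : v ∈ V) (hu : u ∈ V) (hvu : u ≠ v)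
    {g : Equiv.Perm (Fin n)} (hg : g ∈ pm n ((V.erase v).erase u)) :
    Equiv.swap v u * g ∈ pm n V := by
  obtain ⟨hgv, hgu, haux⟩ := aux_apply hvu hg
  have hhv : (Equiv.swap v u * g) v = u := by
    simp [Equiv.Perm.mul_apply, hgv]
  have hhu : (Equiv.swap v u * g) u = v := by
    simp [Equiv.Perm.mul_apply, hgu]
  rw [mem_pm]
  intro i
  by_cases hiv : i = v
  · subst hiv
    refine ⟨by rw [hhv, hhu], ?_⟩
    simp [hhv, hvu, hv]
  by_cases hiu : i = u
  · subst hiu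
    refine ⟨by rw [hhu, hhv], ?_⟩
    simp [hhu, Ne.symm hvu, hu]
  obtain ⟨happ, h1, h2⟩ := haux i hiv hiu
  have happ2 : (Equiv.swap v u * g) (g i) = g (g i) := (haux (g i) h1 h2).1
  refine ⟨by rw [happ, happ2, pm_invol hg], ?_⟩
  rw [happ]
  constructor
  · intro h
    have := (mem_pm.1 hg i).2.1 h
    simp only [Finset.mem_erase] at this
    intro hiV
    exact this ⟨hiu, hiv, hiV⟩
  · intro h
    exact (mem_pm.1 hg i).2.2 (by simp [hiu, hiv, h])

lemma pm_restrict {V : Finset (Fin n)} {f : Equiv.Perm (Fin n)} (hf : f ∈ pm n V) {v : Fin n}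
    (hv : v ∈ V) :
    f v ∈ V.erase v ∧ Equiv.swap v (f v) * f ∈ pm n ((V.erase v).erase (f v)) := by
  set u := f v with hu
  have hvu : u ≠ v := pm_ne hf hv
  have hfu : f u = v := pm_invol hf v
  have huV : u ∈ V := by
    by_contra h
    exact hvu (by rw [← hfu, pm_fix hf h])
  refine ⟨Finset.mem_erase.2 ⟨hvu, huV⟩, ?_⟩
  rw [mem_pm]
  intro i
  have hgv : (Equiv.swap v u * f) v = v := by simp [Equiv.Perm.mul_apply, ← hu]
  have hgu : (Equiv.swap v u * f) u = u := by simp [Equiv.Perm.mul_apply, hfu]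
  by_cases hiv : i = v
  · subst hiv
    refine ⟨by rw [hgv, hgv], by simp [hgv]⟩
  by_cases hiu : i = u
  · subst hiu
    refine ⟨by rw [hgu, hgu], by simp [hgu]⟩
  have h1 : f i ≠ v := by
    intro h
    have := pm_invol hf i
    rw [h, ← hu] at this
    exact hiu this.symm
  have h2 : f i ≠ u := by
    intro h
    have := pm_invol hf i
    rw [h, hfu] at this
    exact hiv this.symm
  have happ : (Equiv.swap v u * f) i = f i := by
    simp [Equiv.Perm.mul_apply, Equiv.swap_apply_of_ne_of_ne h1 h2]
  have happ2 : (Equiv.swap v u * f) (f i) = f (f i) := by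
    have h1' : f (f i) ≠ v := by rw [pm_invol hf i]; exact hiv
    have h2' : f (f i) ≠ u := by rw [pm_invol hf i]; exact hiu
    simp [Equiv.Perm.mul_apply, Equiv.swap_apply_of_ne_of_ne h1' h2']
  refine ⟨by rw [happ, happ2, pm_invol hf], ?_⟩
  rw [happ]
  constructor
  · intro h
    have := (mem_pm.1 hf i).2.1 h
    simp [hiu, hiv, this]
  · intro h
    simp only [Finset.mem_erase, not_and] at h
    exact (mem_pm.1 hf i).2.2 (h hiu hiv)


lemma decomp (V : Finset (Fin n)) {v : Fin n} (hv : v ∈ V) (F : Equiv.Perm (Fin n) → ℝ) :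
    ∑ f ∈ pm n V, F f
      = ∑ u ∈ V.erase v, ∑ g ∈ pm n ((V.erase v).erase u), F (Equiv.swap v u * g) := by
  rw [Finset.sum_sigma' (V.erase v) (fun u => pm n ((V.erase v).erase u))
      (fun u g => F (Equiv.swap v u * g))]
  refine Finset.sum_nbij' (i := fun f => (⟨f v, Equiv.swap v (f v) * f⟩ :
      Σ _ : Fin n, Equiv.Perm (Fin n))) (j := fun p => Equiv.swap v p.1 * p.2) ?_ ?_ ?_ ?_ ?_
  · intro f hf
    obtain ⟨h1, h2⟩ := pm_restrict hf hv
    exact Finset.mem_sigma.2 ⟨h1, h2⟩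
  · rintro ⟨u, g⟩ hp
    obtain ⟨hu, hg⟩ := Finset.mem_sigma.1 hp
    exact pm_extend hv (Finset.mem_of_mem_erase hu) (Finset.ne_of_mem_erase hu) hg
  · intro f hf
    have h1 : (Equiv.swap v (f v)) * (Equiv.swap v (f v) * f) = f := by
      rw [← mul_assoc, Equiv.swap_mul_self, one_mul]
    exact h1
  · rintro ⟨u, g⟩ hp
    obtain ⟨hu, hg⟩ := Finset.mem_sigma.1 hp
    have hvu : u ≠ v := Finset.ne_of_mem_erase hu
    have hgv : g v = v := pm_fix hg (by simp)
    have h1 : (Equiv.swap v u * g) v = u := by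
      simp [Equiv.Perm.mul_apply, hgv]
    have h2 : Equiv.swap v u * (Equiv.swap v u * g) = g := by
      rw [← mul_assoc, Equiv.swap_mul_self, one_mul]
    show (⟨(Equiv.swap v u * g) v, Equiv.swap v ((Equiv.swap v u * g) v) * (Equiv.swap v u * g)⟩ :
      Σ _ : Fin n, Equiv.Perm (Fin n)) = ⟨u, g⟩
    rw [h1, h2]
  · intro f hf
    have h1 : (Equiv.swap v (f v)) * (Equiv.swap v (f v) * f) = f := by
      rw [← mul_assoc, Equiv.swap_mul_self, one_mul]
    rw [h1]


def X (A B : Finset (Fin n)) (f : Equiv.Perm (Fin n)) : ℕ :=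
  (Finset.univ.filter (fun i => i ∈ A ∧ f i ∈ B)).card

noncomputable def w (A B : Finset (Fin n)) (f : Equiv.Perm (Fin n)) : ℝ :=
  (2:ℝ)⁻¹ ^ (X A B f)

lemma X_swap {V A B : Finset (Fin n)} {v u : Fin n}
    (hAB : Disjoint A B) (hvA : v ∈ A) (hvu : u ≠ v)
    {g : Equiv.Perm (Fin n)} (hg : g ∈ pm n ((V.erase v).erase u)) :
    X A B (Equiv.swap v u * g)
      = X ((A.erase v).erase u) ((B.erase v).erase u) g + (if u ∈ B then 1 else 0) := by
  obtain ⟨hgv, hgu, haux⟩ := aux_apply hvu hg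
  have hvB : v ∉ B := Finset.disjoint_left.1 hAB hvA
  have hhv : (Equiv.swap v u * g) v = u := by
    rw [Equiv.Perm.mul_apply, hgv, Equiv.swap_apply_left]
  have hhu : (Equiv.swap v u * g) u = v := by
    rw [Equiv.Perm.mul_apply, hgu, Equiv.swap_apply_right]
  have main : ∀ i, ((i ∈ A ∧ (Equiv.swap v u * g) i ∈ B)
      ↔ ((i ∈ (A.erase v).erase u ∧ g i ∈ (B.erase v).erase u) ∨ (u ∈ B ∧ i = v))) := by
    intro i
    by_cases hiv : i = v
    · have hth : (Equiv.swap v u * g) i = u := by rw [hiv, hhv]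
      constructor
      · rintro ⟨hA, hB⟩
        rw [hth] at hB
        exact Or.inr ⟨hB, hiv⟩
      · rintro (⟨hA', _⟩ | ⟨hub, _⟩)
        · exact absurd hiv (Finset.mem_erase.1 (Finset.mem_erase.1 hA').2).1
        · exact ⟨by rw [hiv]; exact hvA, by rw [hth]; exact hub⟩
    by_cases hiu : i = u
    · have hth : (Equiv.swap v u * g) i = v := by rw [hiu, hhu]
      constructor
      · rintro ⟨hA, hB⟩
        rw [hth] at hB
        exact absurd hB hvB
      · rintro (⟨hA', _⟩ | ⟨_, h⟩)
        · exact absurd hiu (Finset.mem_erase.1 hA').1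
        · exact absurd h hiv
    · obtain ⟨happ, h1, h2⟩ := haux i hiv hiu
      constructor
      · rintro ⟨hA, hB⟩
        rw [happ] at hB
        exact Or.inl ⟨Finset.mem_erase.2 ⟨hiu, Finset.mem_erase.2 ⟨hiv, hA⟩⟩,
          Finset.mem_erase.2 ⟨h2, Finset.mem_erase.2 ⟨h1, hB⟩⟩⟩
      · rintro (⟨hA', hgB'⟩ | ⟨_, h⟩)
        · refine ⟨(Finset.mem_erase.1 (Finset.mem_erase.1 hA').2).2, ?_⟩
          rw [happ]
          exact (Finset.mem_erase.1 (Finset.mem_erase.1 hgB').2).2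
        · exact absurd h hiv
  by_cases huB : u ∈ B
  · have hfilt : (Finset.univ.filter (fun i => i ∈ A ∧ (Equiv.swap v u * g) i ∈ B))
        = insert v (Finset.univ.filter
            (fun i => i ∈ (A.erase v).erase u ∧ g i ∈ (B.erase v).erase u)) := by
      ext i
      simp only [Finset.mem_filter, Finset.mem_univ, true_and, Finset.mem_insert, main i, huB,
        true_and]
      tauto
    have hvnot : v ∉ (Finset.univ.filter
        (fun i => i ∈ (A.erase v).erase u ∧ g i ∈ (B.erase v).erase u)) := by
      simp [Finset.mem_erase]
    rw [X, hfilt, Finset.card_insert_of_notMem hvnot, if_pos huB]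
    rfl
  · have hfilt : (Finset.univ.filter (fun i => i ∈ A ∧ (Equiv.swap v u * g) i ∈ B))
        = (Finset.univ.filter
            (fun i => i ∈ (A.erase v).erase u ∧ g i ∈ (B.erase v).erase u)) := by
      ext i
      simp only [Finset.mem_filter, Finset.mem_univ, true_and, main i]
      tauto
    rw [X, hfilt, if_neg huB]
    rfl

lemma X_symm {A B : Finset (Fin n)} {f : Equiv.Perm (Fin n)}
    (hf : ∀ i, f (f i) = i) : X A B f = X B A f := by
  refine Finset.card_nbij' (fun i => f i) (fun i => f i) ?_ ?_ ?_ ?_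
  · intro a ha
    simp only [Finset.mem_coe, Finset.mem_filter, Finset.mem_univ, true_and] at ha ⊢
    exact ⟨ha.2, by rw [hf]; exact ha.1⟩
  · intro a ha
    simp only [Finset.mem_coe, Finset.mem_filter, Finset.mem_univ, true_and] at ha ⊢
    exact ⟨ha.2, by rw [hf]; exact ha.1⟩
  · intro a _; simp [hf]
  · intro a _; simp [hf]

lemma card_pm_eq {V : Finset (Fin n)} {v u u' : Fin n} (hu : u ∈ V.erase v)
    (hu' : u' ∈ V.erase v) :
    (pm n ((V.erase v).erase u)).card = (pm n ((V.erase v).erase u')).card := by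
  rcases eq_or_ne u u' with rfl | huu
  · rfl
  have key : ∀ i, Equiv.swap u u' i ∈ (V.erase v).erase u ↔ i ∈ (V.erase v).erase u' := by
    intro i
    by_cases hiu : i = u
    · subst hiu
      simp only [Equiv.swap_apply_left, Finset.mem_erase]
      have hu2 := Finset.mem_erase.1 hu
      have hu'2 := Finset.mem_erase.1 hu'
      exact ⟨fun _ => ⟨huu, hu2.1, hu2.2⟩, fun _ => ⟨Ne.symm huu, hu'2.1, hu'2.2⟩⟩
    by_cases hiu' : i = u'
    · subst hiu'
      simp only [Equiv.swap_apply_right, Finset.mem_erase]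
      constructor
      · rintro ⟨h1, _⟩; exact absurd rfl h1
      · rintro ⟨h1, _⟩; exact absurd rfl h1
    · rw [Equiv.swap_apply_of_ne_of_ne hiu hiu']
      simp [Finset.mem_erase, hiu, hiu']
  have mem_conj : ∀ (a b : Fin n) (g : Equiv.Perm (Fin n)),
      (∀ i, Equiv.swap a b i ∈ (V.erase v).erase a ↔ i ∈ (V.erase v).erase b) →
      g ∈ pm n ((V.erase v).erase a) →
      Equiv.swap a b * g * Equiv.swap a b ∈ pm n ((V.erase v).erase b) := by
    intro a b g hk hg
    rw [mem_pm]
    intro i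
    constructor
    · simp only [Equiv.Perm.mul_apply]
      rw [Equiv.swap_apply_self, pm_invol hg, Equiv.swap_apply_self]
    · simp only [Equiv.Perm.mul_apply]
      constructor
      · intro h
        have : g (Equiv.swap a b i) = Equiv.swap a b i := by
          have := congrArg (Equiv.swap a b) h
          rwa [Equiv.swap_apply_self] at this
        have h2 := (mem_pm.1 hg (Equiv.swap a b i)).2.1 this
        intro hmem
        exact h2 ((hk i).2 hmem)
      · intro h
        have : Equiv.swap a b i ∉ (V.erase v).erase a := fun hm => h ((hk i).1 hm)
        rw [pm_fix hg this, Equiv.swap_apply_self]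
  have key' : ∀ i, Equiv.swap u' u i ∈ (V.erase v).erase u' ↔ i ∈ (V.erase v).erase u := by
    intro i
    have := key (Equiv.swap u u' i)
    rw [Equiv.swap_apply_self] at this
    rw [Equiv.swap_comm]
    exact this.symm
  refine Finset.card_nbij' (fun g => Equiv.swap u u' * g * Equiv.swap u u')
    (fun g => Equiv.swap u' u * g * Equiv.swap u' u) ?_ ?_ ?_ ?_
  · intro g hg; exact mem_conj u u' g key hg
  · intro g hg; exact mem_conj u' u g key' hg
  · intro g _
    simp only [Equiv.swap_comm u' u]
    ext i
    simp [Equiv.Perm.mul_apply, Equiv.swap_apply_self]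
  · intro g _
    simp only [Equiv.swap_comm u' u]
    ext i
    simp [Equiv.Perm.mul_apply, Equiv.swap_apply_self]


noncomputable def G (n a b : ℕ) : ℝ :=
  ∏ j ∈ Finset.range ((a + 1) / 2), (1 - ((b - 2 * j : ℕ) : ℝ) / (2 * ((n : ℝ) - 1)))

lemma fac_nonneg {n b j : ℕ} (hn : 2 ≤ n) (hb : b ≤ n) :
    0 ≤ 1 - ((b - 2 * j : ℕ) : ℝ) / (2 * ((n : ℝ) - 1)) := by
  have h1 : ((b - 2 * j : ℕ) : ℝ) ≤ 2 * ((n : ℝ) - 1) := by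
    have : (b - 2 * j : ℕ) ≤ n := le_trans (Nat.sub_le _ _) hb
    have h2 : ((b - 2 * j : ℕ) : ℝ) ≤ (n : ℝ) := by exact_mod_cast this
    have h3 : (2 : ℝ) ≤ (n : ℝ) := by exact_mod_cast hn
    linarith
  have h2 : (0 : ℝ) < 2 * ((n : ℝ) - 1) := by
    have h3 : (2 : ℝ) ≤ (n : ℝ) := by exact_mod_cast hn
    linarith
  have := div_le_one_of_le₀ h1 h2.le
  linarith

lemma fac_le_one {n b j : ℕ} (hn : 2 ≤ n) :
    1 - ((b - 2 * j : ℕ) : ℝ) / (2 * ((n : ℝ) - 1)) ≤ 1 := by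
  have h2 : (0 : ℝ) < 2 * ((n : ℝ) - 1) := by
    have h3 : (2 : ℝ) ≤ (n : ℝ) := by exact_mod_cast hn
    linarith
  have : (0:ℝ) ≤ ((b - 2 * j : ℕ) : ℝ) / (2 * ((n : ℝ) - 1)) :=
    div_nonneg (Nat.cast_nonneg _) h2.le
  linarith

lemma G_nonneg {n a b : ℕ} (hn : 2 ≤ n) (hb : b ≤ n) : 0 ≤ G n a b :=
  Finset.prod_nonneg (fun j _ => fac_nonneg hn hb)

lemma G_mono {n : ℕ} (hn : 2 ≤ n) {a₁ a₂ b₁ b₂ : ℕ} (ha : a₂ ≤ a₁) (hb : b₂ ≤ b₁)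
    (hb₁ : b₁ ≤ n) : G n a₁ b₁ ≤ G n a₂ b₂ := by
  have step1 : G n a₁ b₁ ≤ G n a₂ b₁ := by
    unfold G
    have hle : (a₂ + 1) / 2 ≤ (a₁ + 1) / 2 := Nat.div_le_div_right (by omega)
    rw [← Finset.prod_range_mul_prod_Ico _ hle]
    have h1 : ∏ j ∈ Finset.Ico ((a₂ + 1) / 2) ((a₁ + 1) / 2),
        (1 - ((b₁ - 2 * j : ℕ) : ℝ) / (2 * ((n : ℝ) - 1))) ≤ 1 :=
      Finset.prod_le_one (fun j _ => fac_nonneg hn hb₁) (fun j _ => fac_le_one hn)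
    have h2 : (0:ℝ) ≤ ∏ j ∈ Finset.range ((a₂ + 1) / 2),
        (1 - ((b₁ - 2 * j : ℕ) : ℝ) / (2 * ((n : ℝ) - 1))) :=
      Finset.prod_nonneg (fun j _ => fac_nonneg hn hb₁)
    nlinarith
  refine le_trans step1 ?_
  unfold G
  refine Finset.prod_le_prod (fun j _ => fac_nonneg hn hb₁) (fun j _ => ?_)
  have h2 : (0 : ℝ) < 2 * ((n : ℝ) - 1) := by
    have h3 : (2 : ℝ) ≤ (n : ℝ) := by exact_mod_cast hn
    linarith
  have : ((b₂ - 2 * j : ℕ) : ℝ) ≤ ((b₁ - 2 * j : ℕ) : ℝ) := by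
    exact_mod_cast Nat.sub_le_sub_right hb _
  have h4 : ((b₂ - 2 * j : ℕ) : ℝ) / (2 * ((n : ℝ) - 1))
      ≤ ((b₁ - 2 * j : ℕ) : ℝ) / (2 * ((n : ℝ) - 1)) := by gcongr
  linarith

lemma G_succ {n : ℕ} (m b : ℕ) (hm : 1 ≤ m) :
    G n m b = (1 - (b : ℝ) / (2 * ((n : ℝ) - 1))) * G n (m - 2) (b - 2) := by
  unfold G
  have hk : (m + 1) / 2 = ((m - 2 + 1) / 2) + 1 := by omega
  rw [hk, Finset.prod_range_succ']
  have h0 : ((b - 2 * 0 : ℕ) : ℝ) = (b : ℝ) := by norm_num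
  rw [h0, mul_comm]
  congr 1
  refine Finset.prod_congr rfl (fun j _ => ?_)
  have : b - 2 * (j + 1) = b - 2 - 2 * j := by omega
  rw [this]





lemma G_le {n a b : ℕ} (hn : 2 ≤ n) (hab : a ≤ b) (hb : b ≤ n) :
    G n a b ≤ Real.exp (-((a : ℝ) * b) / (8 * n)) := by
  set s := (a + 1) / 2 with hs
  have hnR : (2 : ℝ) ≤ (n : ℝ) := by exact_mod_cast hn
  have hd : (0 : ℝ) < 2 * ((n : ℝ) - 1) := by linarith
  have hcast : ∀ j ∈ Finset.range s, ((b - 2 * j : ℕ) : ℝ) = (b : ℝ) - 2 * (j : ℝ) := by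
    intro j hj
    rw [Finset.mem_range] at hj
    have h2j : 2 * j ≤ b := by omega
    push_cast [Nat.cast_sub h2j]
    ring
  have step1 : G n a b ≤ ∏ j ∈ Finset.range s,
      Real.exp (-(((b : ℝ) - 2 * j) / (2 * ((n : ℝ) - 1)))) := by
    refine Finset.prod_le_prod (fun j _ => fac_nonneg hn hb) (fun j hj => ?_)
    rw [hcast j hj]
    have := Real.add_one_le_exp (-(((b : ℝ) - 2 * j) / (2 * ((n : ℝ) - 1))))
    linarith
  have step2 : ∏ j ∈ Finset.range s,
      Real.exp (-(((b : ℝ) - 2 * j) / (2 * ((n : ℝ) - 1))))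
      = Real.exp (∑ j ∈ Finset.range s, -(((b : ℝ) - 2 * j) / (2 * ((n : ℝ) - 1)))) :=
    (Real.exp_sum _ _).symm
  have hsum : ∑ j ∈ Finset.range s, (((b : ℝ) - 2 * j)) = s * b - s * (s - 1) := by
    rw [Finset.sum_sub_distrib]
    have h1 : ∑ j ∈ Finset.range s, ((b : ℝ)) = s * b := by
      rw [Finset.sum_const, Finset.card_range, nsmul_eq_mul]
    have h2 : ∑ j ∈ Finset.range s, (2 * (j : ℝ)) = s * (s - 1) := by
      rw [← Finset.mul_sum]
      have h3 := Finset.sum_range_id_mul_two s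
      have h4 : ((∑ i ∈ Finset.range s, i) : ℝ) * 2 = (s : ℝ) * ((s : ℝ) - 1) := by
        rcases Nat.eq_zero_or_pos s with hs0 | hs0
        · simp [hs0]
        · have : ((s * (s - 1) : ℕ) : ℝ) = (s : ℝ) * ((s : ℝ) - 1) := by
            push_cast [Nat.cast_sub hs0]
            ring
          rw [← this, ← h3]
          push_cast
          ring
      push_cast at h4 ⊢
      linarith
    rw [h1, h2]
  have hSge : ((a : ℝ) * b) / 4 ≤ (s : ℝ) * b - s * (s - 1) := by
    have h2s1 : (a : ℝ) ≤ 2 * s := by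
      have : a ≤ 2 * s := by omega
      exact_mod_cast this
    have h2s2 : 2 * (s : ℝ) ≤ (a : ℝ) + 1 := by
      have : 2 * s ≤ a + 1 := by omega
      exact_mod_cast this
    have habR : (a : ℝ) ≤ b := by exact_mod_cast hab
    have hb0 : (0 : ℝ) ≤ b := Nat.cast_nonneg _
    have hs0 : (0 : ℝ) ≤ s := Nat.cast_nonneg _
    nlinarith [mul_nonneg hs0 (by linarith : (0 : ℝ) ≤ (b : ℝ) - 2 * s + 2),
      mul_nonneg (by linarith : (0 : ℝ) ≤ 2 * (s : ℝ) - a) hb0]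
  refine le_trans step1 (le_trans (le_of_eq step2) ?_)
  rw [Real.exp_le_exp]
  have hsum2 : ∑ j ∈ Finset.range s, -(((b : ℝ) - 2 * j) / (2 * ((n : ℝ) - 1)))
      = -((∑ j ∈ Finset.range s, ((b : ℝ) - 2 * j)) / (2 * ((n : ℝ) - 1))) := by
    rw [Finset.sum_neg_distrib, ← Finset.sum_div]
  rw [hsum2, hsum]
  have hab0 : (0 : ℝ) ≤ (a : ℝ) * b := mul_nonneg (Nat.cast_nonneg _) (Nat.cast_nonneg _)
  have h8n : (0 : ℝ) < 8 * n := by linarith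
  rw [neg_div, neg_le_neg_iff]
  calc ((a : ℝ) * b) / (8 * n) ≤ ((a : ℝ) * b) / (4 * (2 * ((n : ℝ) - 1))) :=
        div_le_div_of_nonneg_left hab0 (by linarith) (by linarith)
    _ = (((a : ℝ) * b) / 4) / (2 * ((n : ℝ) - 1)) := (div_div _ _ _).symm
    _ ≤ ((s : ℝ) * b - s * (s - 1)) / (2 * ((n : ℝ) - 1)) := by gcongr



lemma w_nonneg (A B : Finset (Fin n)) (f : Equiv.Perm (Fin n)) : 0 ≤ w A B f := by
  unfold w
  positivity

lemma card_le_n (S : Finset (Fin n)) : S.card ≤ n := by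
  have := Finset.card_le_univ S
  simpa using this

lemma key (a : ℕ) : ∀ (V A B : Finset (Fin n)), A.card ≤ a → A ⊆ V → B ⊆ V → Disjoint A B →
    ∑ f ∈ pm n V, w A B f ≤ G n A.card B.card * ((pm n V).card : ℝ) := by
  induction a with
  | zero =>
    intro V A B hA hAV hBV hAB
    have hA0 : A = ∅ := Finset.card_eq_zero.1 (Nat.le_zero.1 hA)
    subst hA0
    have hw : ∀ f ∈ pm n V, w ∅ B f = 1 := by
      intro f _
      simp [w, X]
    rw [Finset.sum_congr rfl hw, Finset.sum_const, nsmul_eq_mul, mul_one]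
    have hG : G n (Finset.card (∅ : Finset (Fin n))) B.card = 1 := by
      simp [G]
    rw [hG, one_mul]
  | succ a ih =>
    intro V A B hA hAV hBV hAB
    rcases Nat.lt_or_ge A.card (a + 1) with hlt | hge
    · exact ih V A B (by omega) hAV hBV hAB
    have hAcard : A.card = a + 1 := le_antisymm hA hge
    obtain ⟨v, hvA⟩ := Finset.card_pos.1 (show 0 < A.card by omega)
    have hvV : v ∈ V := hAV hvA
    have hvB : v ∉ B := Finset.disjoint_left.1 hAB hvA
    rw [decomp V hvV (w A B)]
    have hcard : ((pm n V).card : ℝ)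
        = ∑ u ∈ V.erase v, ((pm n ((V.erase v).erase u)).card : ℝ) := by
      have h := decomp (n := n) V hvV (fun _ => (1:ℝ))
      simp only [Finset.sum_const, nsmul_eq_mul, mul_one] at h
      exact_mod_cast h
    rcases Finset.eq_empty_or_nonempty (V.erase v) with hemp | ⟨u₀, hu₀⟩
    · rw [hemp] at hcard ⊢
      simp only [Finset.sum_empty] at hcard ⊢
      rw [hcard]
      simp
    have hn2 : 2 ≤ n := by
      have h1 : 1 < Fintype.card (Fin n) :=
        Fintype.one_lt_card_iff.2 ⟨u₀, v, Finset.ne_of_mem_erase hu₀⟩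
      simp at h1; omega
    have hnR : (2:ℝ) ≤ (n:ℝ) := by exact_mod_cast hn2
    have hd : (0:ℝ) < 2 * ((n:ℝ) - 1) := by linarith
    set b := B.card with hb
    set N : ℝ := ((pm n ((V.erase v).erase u₀)).card : ℝ) with hN
    have hN0 : (0:ℝ) ≤ N := Nat.cast_nonneg _
    have hNeq : ∀ u ∈ V.erase v, ((pm n ((V.erase v).erase u)).card : ℝ) = N := by
      intro u hu
      rw [hN]
      exact_mod_cast card_pm_eq hu hu₀
    set Gs : ℝ := G n (a + 1 - 2) (b - 2) with hGs
    have hGs0 : 0 ≤ Gs := G_nonneg hn2 (le_trans (Nat.sub_le _ _) (le_trans (card_le_n B) le_rfl))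
    have inner : ∀ u ∈ V.erase v,
        ∑ g ∈ pm n ((V.erase v).erase u), w A B (Equiv.swap v u * g)
          ≤ (if u ∈ B then (2:ℝ)⁻¹ else 1) * (Gs * N) := by
      intro u hu
      have hvu : u ≠ v := Finset.ne_of_mem_erase hu
      set A' := (A.erase v).erase u with hA'
      set B' := (B.erase v).erase u with hB'
      have hterm : ∀ g ∈ pm n ((V.erase v).erase u),
          w A B (Equiv.swap v u * g) = (if u ∈ B then (2:ℝ)⁻¹ else 1) * w A' B' g := by
        intro g hg
        rw [w, X_swap hAB hvA hvu hg, pow_add, w]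
        by_cases huB : u ∈ B
        · rw [if_pos huB, if_pos huB, pow_one, mul_comm]
        · rw [if_neg huB, if_neg huB, pow_zero, mul_comm]
      rw [Finset.sum_congr rfl hterm, ← Finset.mul_sum]
      have hc0 : (0:ℝ) ≤ (if u ∈ B then (2:ℝ)⁻¹ else 1) := by
        by_cases huB : u ∈ B <;> simp [huB] <;> norm_num
      refine mul_le_mul_of_nonneg_left ?_ hc0
      have hsub : ∑ g ∈ pm n ((V.erase v).erase u), w A' B' g
          ≤ G n A'.card B'.card * ((pm n ((V.erase v).erase u)).card : ℝ) := by
        refine ih ((V.erase v).erase u) A' B' ?_ ?_ ?_ ?_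
        · have h1 : (A.erase v).card = a := by
            rw [Finset.card_erase_of_mem hvA, hAcard]
            omega
          calc A'.card ≤ (A.erase v).card := Finset.card_erase_le
            _ = a := h1
        · exact Finset.erase_subset_erase u (Finset.erase_subset_erase v hAV)
        · exact Finset.erase_subset_erase u (Finset.erase_subset_erase v hBV)
        · exact Disjoint.mono ((Finset.erase_subset _ _).trans (Finset.erase_subset _ _))
            ((Finset.erase_subset _ _).trans (Finset.erase_subset _ _)) hAB
      have hGmono : G n A'.card B'.card ≤ Gs := by
        refine G_mono hn2 ?_ ?_ (card_le_n _)
        · have h1 : (A.erase v).card = a := by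
            rw [Finset.card_erase_of_mem hvA, hAcard]
            omega
          have h2 : (A.erase v).card - 1 ≤ A'.card := Finset.pred_card_le_card_erase
          omega
        · have h2 : B.card - 1 ≤ (B.erase v).card := Finset.pred_card_le_card_erase
          have h3 : (B.erase v).card - 1 ≤ B'.card := Finset.pred_card_le_card_erase
          omega
      calc ∑ g ∈ pm n ((V.erase v).erase u), w A' B' g
          ≤ G n A'.card B'.card * ((pm n ((V.erase v).erase u)).card : ℝ) := hsub
        _ = G n A'.card B'.card * N := by rw [hNeq u hu]
        _ ≤ Gs * N := mul_le_mul_of_nonneg_right hGmono hN0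
    refine le_trans (Finset.sum_le_sum inner) ?_
    -- compute the sum of coefficients
    have hBsub : B ⊆ V.erase v := fun x hx =>
      Finset.mem_erase.2 ⟨fun h => hvB (h ▸ hx), hBV hx⟩
    have hsumc : ∑ u ∈ V.erase v, (if u ∈ B then (2:ℝ)⁻¹ else 1)
        = ((V.erase v).card : ℝ) - 2⁻¹ * b := by
      have h1 : ∀ u, (if u ∈ B then (2:ℝ)⁻¹ else 1)
          = 1 - (if u ∈ B then (2:ℝ)⁻¹ else 0) := by
        intro u
        by_cases huB : u ∈ B <;> simp [huB] <;> norm_num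
      simp only [h1]
      rw [Finset.sum_sub_distrib, Finset.sum_const, nsmul_eq_mul, mul_one]
      congr 1
      rw [Finset.sum_ite_mem, Finset.inter_eq_right.2 hBsub, Finset.sum_const, nsmul_eq_mul,
        mul_comm]
    rw [← Finset.sum_mul, hsumc]
    -- total cardinality
    have hcard2 : ((pm n V).card : ℝ) = ((V.erase v).card : ℝ) * N := by
      rw [hcard, Finset.sum_congr rfl hNeq, Finset.sum_const, nsmul_eq_mul]
    rw [hcard2, hAcard, G_succ (a+1) b (by omega), ← hGs]
    set m : ℝ := ((V.erase v).card : ℝ) with hm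
    have hm0 : (0:ℝ) ≤ m := Nat.cast_nonneg _
    have hmn : m ≤ (n:ℝ) - 1 := by
      have h1 : (V.erase v).card ≤ n - 1 := by
        have h2 : (V.erase v).card = V.card - 1 := Finset.card_erase_of_mem hvV
        have h3 : V.card ≤ n := card_le_n V
        omega
      have h4 : ((n - 1 : ℕ) : ℝ) = (n:ℝ) - 1 := by
        have : 1 ≤ n := by omega
        push_cast [Nat.cast_sub this]
        ring
      calc m ≤ ((n - 1 : ℕ) : ℝ) := by rw [hm]; exact_mod_cast h1
        _ = (n:ℝ) - 1 := h4
    have hb0 : (0:ℝ) ≤ (b:ℝ) := Nat.cast_nonneg _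
    have hmb : m - 2⁻¹ * (b:ℝ) ≤ (1 - (b:ℝ) / (2 * ((n:ℝ) - 1))) * m := by
      have h1 : (b:ℝ) / (2 * ((n:ℝ) - 1)) * m ≤ 2⁻¹ * b := by
        rw [div_mul_eq_mul_div, div_le_iff₀ hd]
        nlinarith [mul_nonneg hb0 (by linarith : (0:ℝ) ≤ (n:ℝ) - 1 - m)]
      nlinarith [h1]
    calc (m - 2⁻¹ * (b:ℝ)) * (Gs * N) ≤ ((1 - (b:ℝ) / (2 * ((n:ℝ) - 1))) * m) * (Gs * N) :=
          mul_le_mul_of_nonneg_right hmb (mul_nonneg hGs0 hN0)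
      _ = (1 - (b:ℝ) / (2 * ((n:ℝ) - 1))) * Gs * (m * N) := by ring


lemma main (hn2 : 2 ≤ n) (A B : Finset (Fin n)) (hAB : Disjoint A B)
    (hle : A.card ≤ B.card) :
    ((Finset.filter (fun f => ((X A B f : ℝ)) ≤ (A.card : ℝ) * B.card / (8 * n))
        (pm n Finset.univ)).card : ℝ)
      ≤ Real.exp (-((A.card : ℝ) * B.card) / (32 * n)) * ((pm n Finset.univ).card : ℝ) := by
  have hnR : (2:ℝ) ≤ (n:ℝ) := by exact_mod_cast hn2
  set T : ℝ := (A.card : ℝ) * B.card / (8 * n) with hT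
  have hT0 : 0 ≤ T := by
    apply div_nonneg (mul_nonneg (Nat.cast_nonneg _) (Nat.cast_nonneg _)) (by linarith)
  set E := Finset.filter (fun f => ((X A B f : ℝ)) ≤ T) (pm n Finset.univ) with hE
  set y : ℝ := (2:ℝ)⁻¹ ^ T with hy
  have hy0 : 0 < y := Real.rpow_pos_of_pos (by norm_num) _
  set P : ℝ := ((pm n Finset.univ).card : ℝ) with hP
  have hP0 : 0 ≤ P := Nat.cast_nonneg _
  have h1 : ∀ f ∈ E, y ≤ w A B f := by
    intro f hf
    have hXT : ((X A B f : ℝ)) ≤ T := (Finset.mem_filter.1 hf).2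
    have : w A B f = (2:ℝ)⁻¹ ^ ((X A B f : ℕ) : ℝ) := by
      rw [w, Real.rpow_natCast]
    rw [this]
    exact Real.rpow_le_rpow_of_exponent_ge (by norm_num) (by norm_num) hXT
  have h2 : (E.card : ℝ) * y ≤ ∑ f ∈ E, w A B f := by
    have := Finset.card_nsmul_le_sum E (w A B) y h1
    rwa [nsmul_eq_mul] at this
  have h3 : ∑ f ∈ E, w A B f ≤ ∑ f ∈ pm n Finset.univ, w A B f :=
    Finset.sum_le_sum_of_subset_of_nonneg (Finset.filter_subset _ _)
      (fun f _ _ => w_nonneg A B f)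
  have h4 : ∑ f ∈ pm n Finset.univ, w A B f
      ≤ Real.exp (-((A.card : ℝ) * B.card) / (8 * n)) * P := by
    refine le_trans (key A.card Finset.univ A B le_rfl (Finset.subset_univ _)
      (Finset.subset_univ _) hAB) ?_
    exact mul_le_mul_of_nonneg_right (G_le hn2 hle (card_le_n B)) hP0
  have h5 : (E.card : ℝ) * y ≤ Real.exp (-((A.card : ℝ) * B.card) / (8 * n)) * P :=
    le_trans h2 (le_trans h3 h4)
  have h6 : (E.card : ℝ) ≤ Real.exp (-((A.card : ℝ) * B.card) / (8 * n) + Real.log 2 * T) * P := by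
    have hyexp : y = Real.exp (-(Real.log 2 * T)) := by
      rw [hy, Real.rpow_def_of_pos (by norm_num : (0:ℝ) < (2:ℝ)⁻¹), Real.log_inv]
      ring_nf
    have h7 : (E.card : ℝ) ≤ (Real.exp (-((A.card : ℝ) * B.card) / (8 * n)) * P) / y :=
      (le_div_iff₀ hy0).2 h5
    refine le_trans h7 (le_of_eq ?_)
    rw [hyexp, div_eq_mul_inv, ← Real.exp_neg, neg_neg, Real.exp_add]
    ring
  refine le_trans h6 (mul_le_mul_of_nonneg_right (Real.exp_le_exp.2 ?_) hP0)
  have hlog : Real.log 2 ≤ 3/4 := le_of_lt (lt_trans Real.log_two_lt_d9 (by norm_num))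
  have ht4 : -((A.card : ℝ) * B.card) / (32 * n) = -(T / 4) := by
    rw [hT]
    rw [neg_div, div_div]
    congr 2
    ring
  rw [ht4, show -((A.card : ℝ) * B.card) / (8 * (n:ℝ)) = -T by rw [hT, neg_div]]
  nlinarith [mul_nonneg hT0 (by linarith : (0:ℝ) ≤ 3/4 - Real.log 2)]


end MatchAux

/-- Let `n` be an even positive integer, `A, B ⊆ [n]` disjoint, and let `M` be a uniformly random
perfect matching of `K_n`. Then the probability that the number of edges of `M` with one endpoint
in `A` and the other in `B` is at most `|A||B|/(8n)` is at most `exp(−|A||B|/(32n))` (stated as a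
counting bound; since `A` and `B` are disjoint, each such edge `{i, f i}` is counted once by the
condition `i ∈ A ∧ f i ∈ B`). -/
theorem matching_edges_between :
    ∀ n : ℕ, 0 < n → Even n → ∀ A B : Finset (Fin n), Disjoint A B →
      (Set.ncard {f ∈ perfectMatchings n |
          (Set.ncard {i : Fin n | i ∈ A ∧ f i ∈ B} : ℝ) ≤
            (A.card : ℝ) * B.card / (8 * n)} : ℝ) ≤
        Real.exp (-((A.card : ℝ) * B.card) / (32 * n)) *
          (Set.ncard (perfectMatchings n) : ℝ) := by
  intro n hn0 hneven A B hAB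
  have hn2 : 2 ≤ n := by
    obtain ⟨k, hk⟩ := hneven
    omega
  have hpm : perfectMatchings n = ↑(MatchAux.pm n Finset.univ) := by
    ext f
    simp only [perfectMatchings, Set.mem_setOf_eq, Finset.mem_coe, MatchAux.mem_pm,
      Finset.mem_univ, not_true_eq_false, iff_false]
  have hxf : ∀ (C D : Finset (Fin n)) (f : Equiv.Perm (Fin n)),
      ({i : Fin n | i ∈ C ∧ f i ∈ D}).ncard = MatchAux.X C D f := by
    intro C D f
    have h : {i : Fin n | i ∈ C ∧ f i ∈ D}
        = ↑(Finset.univ.filter (fun i => i ∈ C ∧ f i ∈ D)) := by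
      ext i
      simp
    rw [h, Set.ncard_coe_finset]
    rfl
  have hEvent : ∀ (C D : Finset (Fin n)),
      {f ∈ perfectMatchings n |
          (Set.ncard {i : Fin n | i ∈ C ∧ f i ∈ D} : ℝ) ≤ (C.card : ℝ) * D.card / (8 * n)}
        = ↑(Finset.filter (fun f => ((MatchAux.X C D f : ℝ)) ≤ (C.card : ℝ) * D.card / (8 * n))
            (MatchAux.pm n Finset.univ)) := by
    intro C D
    ext f
    constructor
    · rintro ⟨hfS, hp⟩
      rw [Finset.mem_coe, Finset.mem_filter]
      rw [hpm, Finset.mem_coe] at hfS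
      refine ⟨hfS, ?_⟩
      rwa [hxf C D f] at hp
    · intro hf
      rw [Finset.mem_coe, Finset.mem_filter] at hf
      refine ⟨?_, ?_⟩
      · rw [hpm, Finset.mem_coe]
        exact hf.1
      · rw [hxf C D f]
        exact hf.2
  rw [hEvent A B, Set.ncard_coe_finset, hpm, Set.ncard_coe_finset]
  by_cases hle : A.card ≤ B.card
  · exact MatchAux.main hn2 A B hAB hle
  · have hfilter_eq : Finset.filter
        (fun f => ((MatchAux.X A B f : ℝ)) ≤ (A.card : ℝ) * B.card / (8 * n))
        (MatchAux.pm n Finset.univ)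
        = Finset.filter
            (fun f => ((MatchAux.X B A f : ℝ)) ≤ (B.card : ℝ) * A.card / (8 * n))
            (MatchAux.pm n Finset.univ) := by
      apply Finset.filter_congr
      intro f hf
      have hinv : ∀ i, f (f i) = i := fun i => (MatchAux.mem_pm.1 hf i).1
      rw [MatchAux.X_symm hinv, mul_comm ((A.card : ℝ)) ((B.card : ℝ))]
    rw [hfilter_eq, show -((A.card : ℝ) * B.card) = -((B.card : ℝ) * A.card) by ring]
    exact MatchAux.main hn2 B A hAB.symm (le_of_not_ge hle)
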